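/- Let n ≥ 2 be an integer, b ∈ ℂ, and let w ∈ ℂ be a periodic point of g_b of period h ≥ 1 with multiplier μ = ∏_{j=0}^{h-1} (g_b^{∘j}(w))^{n-1}. If any one of the four numbers μ, w, b, b^{n-1} is an algebraic integer, then all four of them are algebraic integers. -/

import Mathlib

set_option maxHeartbeats 1000000
set_option synthInstance.maxHeartbeats 400000

open Polynomial Finset

theorem aux_int_of_inv_poly {K : Type*} [Field K] (x : K) (hx : x ≠ 0)
    (p : Polynomial ℤ) (hp : Polynomial.aeval x⁻¹ p = x) : IsIntegral ℤ x := by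
  set d := p.natDegree with hd
  have key : (∑ i ∈ range (d+1), (p.coeff i : K) * x ^ (d - i)) = x ^ (d+1) := by
    have h1 : ∀ i ∈ range (d+1), (p.coeff i : K) * x ^ (d - i)
        = x ^ d * ((p.coeff i : K) * (x⁻¹) ^ i) := by
      intro i hi
      rw [mem_range, Nat.lt_succ_iff] at hi
      rw [show x ^ d = x ^ (d - i) * x ^ i by rw [← pow_add, Nat.sub_add_cancel hi]]
      rw [inv_pow]
      field_simp
    rw [Finset.sum_congr rfl h1, ← Finset.mul_sum]
    have h2 := Polynomial.aeval_eq_sum_range (p := p) (x⁻¹ : K)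
    rw [hp, ← hd] at h2
    have h3 : (∑ i ∈ range (d+1), (p.coeff i : K) * (x⁻¹) ^ i) = x := by
      rw [show (∑ i ∈ range (d+1), (p.coeff i : K) * (x⁻¹) ^ i)
          = ∑ i ∈ range (d+1), p.coeff i • (x⁻¹ : K) ^ i from
        Finset.sum_congr rfl fun i _ => (zsmul_eq_mul _ _).symm, ← h2]
    rw [h3, pow_succ]
  refine ⟨X ^ (d+1) - ∑ i ∈ range (d+1), C (p.coeff i) * X ^ (d - i), ?_, ?_⟩
  · apply monic_X_pow_sub
    refine lt_of_le_of_lt (degree_sum_le _ _) ?_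
    rw [Finset.sup_lt_iff (by exact bot_lt_iff_ne_bot.mpr (by simp))]
    intro i hi
    refine lt_of_le_of_lt (degree_C_mul_X_pow_le _ _) ?_
    exact_mod_cast Nat.cast_lt.mpr (Nat.lt_succ_of_le (Nat.sub_le d i))
  · have : Polynomial.aeval x (X ^ (d+1) - ∑ i ∈ range (d+1), C (p.coeff i) * X ^ (d - i))
        = (0 : K) := by
      simp only [map_sub, map_sum, map_mul, map_pow, Polynomial.aeval_X, Polynomial.aeval_C]
      rw [sub_eq_zero, ← key]
      refine Finset.sum_congr rfl fun i _ => ?_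
      simp [algebraMap_int_eq]
    simpa [Polynomial.aeval_def] using this

theorem aux_exists_vs {K : Type*} [Field K] (x : K) (hx : ¬ IsIntegral ℤ x) :
    ∃ V : ValuationSubring K, x ∉ V := by
  have hx0 : x ≠ 0 := fun h => hx (h ▸ isIntegral_zero)
  set y := x⁻¹ with hy_def
  set S : Subalgebra ℤ K := Algebra.adjoin ℤ {y} with hS
  have hy : y ∈ S.toSubring := Algebra.subset_adjoin rfl
  have hproper : Ideal.span {(⟨y, hy⟩ : S.toSubring)} ≠ ⊤ := by
    intro htop
    rw [Ideal.span_singleton_eq_top] at htop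
    obtain ⟨u, hu⟩ := htop
    have h1 : (u.val : S.toSubring) * u.inv = 1 := u.val_inv
    have h2 : y * (u.inv : K) = 1 := by
      have h3 := congrArg (Subtype.val) h1
      rw [hu] at h3
      exact h3
    have hinv : (u.inv : K) = x := by
      have : (u.inv : K) = y⁻¹ := eq_inv_of_mul_eq_one_right h2
      rw [this, hy_def, inv_inv]
    have hmem : x ∈ S := by rw [← hinv]; exact u.inv.2
    rw [hS, Algebra.adjoin_singleton_eq_range_aeval] at hmem
    obtain ⟨p, hp⟩ := hmem
    exact hx (aux_int_of_inv_poly x hx0 p (by rw [show (Polynomial.aeval x⁻¹ p : K) = (Polynomial.aeval y).toRingHom p from rfl, hp]))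
  obtain ⟨M, hM, hMle⟩ := Ideal.exists_le_maximal _ hproper
  haveI := hM.isPrime
  set A := LocalSubring.ofPrime S.toSubring M with hA
  obtain ⟨V, hV⟩ := LocalSubring.exists_le_valuationSubring A
  obtain ⟨hle, hloc⟩ := hV
  refine ⟨V, fun hxV => ?_⟩
  have hyA : (y ∈ A.toSubring) := LocalSubring.le_ofPrime S.toSubring M hy
  have hyMem : ⟨y, hy⟩ ∈ M := hMle (Ideal.mem_span_singleton_self _)
  have hnonunit : ¬ IsUnit (⟨y, hyA⟩ : A.toSubring) := by
    intro hu
    have heq : (algebraMap S.toSubring A.toSubring ⟨y, hy⟩) = ⟨y, hyA⟩ := rfl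
    rw [← heq] at hu
    have := (IsLocalization.AtPrime.isUnit_to_map_iff A.toSubring M ⟨y, hy⟩).mp hu
    exact this hyMem
  apply hnonunit
  apply hloc.1
  have hyV : y ∈ V.toLocalSubring.toSubring := hle hyA
  show IsUnit (Subring.inclusion hle ⟨y, hyA⟩)
  have : (Subring.inclusion hle ⟨y, hyA⟩) = ⟨y, hyV⟩ := rfl
  rw [this]
  exact IsUnit.of_mul_eq_one (⟨x, hxV⟩ : V.toLocalSubring.toSubring) (Subtype.ext (by simp [hy_def, hx0]))

def NN (n : ℕ) : ℕ → ℕ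
  | 0 => 0
  | k+1 => n * NN n k + 1

theorem auxA (n : ℕ) (hn : 2 ≤ n) (b : ℂ) (g : ℂ → ℂ)
    (hg : g = fun z : ℂ => (z ^ n + b) / n)
    (w : ℂ) (h : ℕ) (hh : 1 ≤ h) (hper : g^[h] w = w)
    (hb : IsIntegral ℤ b) : IsIntegral ℤ w := by
  have hn0 : (n : ℂ) ≠ 0 := Nat.cast_ne_zero.mpr (by omega)
  set R := Algebra.adjoin ℤ {b} with hR
  have hbR : b ∈ R := Algebra.subset_adjoin rfl
  set β : R := ⟨b, hbR⟩ with hβ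
  -- the iterated polynomial
  let P : ℕ → Polynomial R := fun k => Nat.rec X
    (fun k Pk => Pk ^ n + C ((n : R) ^ (n * NN n k) * β)) k
  have hP0 : P 0 = X := rfl
  have hPsucc : ∀ k, P (k+1) = P k ^ n + C ((n : R) ^ (n * NN n k) * β) := fun k => rfl
  have hEval : ∀ k, Polynomial.aeval w (P k) = (n : ℂ) ^ (NN n k) * g^[k] w := by
    intro k
    induction k with
    | zero => simp [hP0, NN]
    | succ k ih =>
      rw [hPsucc, map_add, map_pow, Polynomial.aeval_C, ih]
      have hiter : g^[k+1] w = ((g^[k] w) ^ n + b) / n := by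
        rw [Function.iterate_succ_apply', hg]
      rw [hiter]
      have halg : (algebraMap R ℂ) ((n : R) ^ (n * NN n k) * β) =
          (n : ℂ) ^ (n * NN n k) * b := by
        push_cast [hβ]
        rfl
      rw [halg]
      show ((n:ℂ) ^ NN n k * g^[k] w) ^ n + (n:ℂ) ^ (n * NN n k) * b
        = (n:ℂ) ^ (NN n (k+1)) * (((g^[k] w) ^ n + b) / n)
      rw [show NN n (k+1) = n * NN n k + 1 from rfl]
      field_simp
      ring
  have hMonic : ∀ k, (P k).Monic ∧ (P k).natDegree = n ^ k := by
    intro k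
    induction k with
    | zero => exact ⟨monic_X, natDegree_X⟩
    | succ k ih =>
      obtain ⟨hm, hdeg⟩ := ih
      have hmp : ((P k) ^ n).Monic := hm.pow n
      have hdp : ((P k) ^ n).natDegree = n ^ (k+1) := by
        rw [hm.natDegree_pow, hdeg]; ring
      have hlt : (C ((n : R) ^ (n * NN n k) * β)).degree < ((P k) ^ n).degree := by
        refine lt_of_le_of_lt Polynomial.degree_C_le ?_
        rw [Polynomial.degree_eq_natDegree hmp.ne_zero, hdp]
        exact_mod_cast Nat.cast_pos.mpr (pow_pos (by omega) (k+1))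
      constructor
      · rw [hPsucc]
        exact hmp.add_of_left hlt
      · rw [hPsucc, Polynomial.natDegree_add_eq_left_of_degree_lt hlt, hdp]
  -- w is integral over R
  have hIntR : IsIntegral R w := by
    refine ⟨P h - C ((n : R) ^ (NN n h)) * X, ?_, ?_⟩
    · obtain ⟨hm, hdeg⟩ := hMonic h
      apply hm.sub_of_left
      refine lt_of_le_of_lt (Polynomial.degree_C_mul_X_le _) ?_
      rw [Polynomial.degree_eq_natDegree hm.ne_zero, hdeg]
      exact_mod_cast Nat.one_lt_cast.mpr (by
        calc 1 < n ^ 1 := by rw [pow_one]; omega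
        _ ≤ n ^ h := Nat.pow_le_pow_right (by omega) hh)
    · have : Polynomial.aeval w (P h - C ((n : R) ^ (NN n h)) * X) = 0 := by
        rw [map_sub, map_mul, Polynomial.aeval_C, Polynomial.aeval_X, hEval, hper]
        push_cast
        ring
      simpa [Polynomial.aeval_def] using this
  haveI : Algebra.IsIntegral ℤ R := Algebra.IsIntegral.adjoin (by
    rintro x rfl
    exact hb)
  exact isIntegral_trans w hIntR

theorem auxB (n : ℕ) (hn : 2 ≤ n) (b : ℂ) (g : ℂ → ℂ)
    (hg : g = fun z : ℂ => (z ^ n + b) / n)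
    (w : ℂ) (h : ℕ) (hh : 1 ≤ h) (hper : g^[h] w = w)
    (hw : IsIntegral ℤ w) : IsIntegral ℤ b := by
  have hn0 : (n : ℂ) ≠ 0 := Nat.cast_ne_zero.mpr (by omega)
  set T := Algebra.adjoin ℤ {w} with hT
  have hwT : w ∈ T := Algebra.subset_adjoin rfl
  set ω : T := ⟨w, hwT⟩ with hω
  let Q : ℕ → Polynomial T := fun k => Nat.rec (C ω)
    (fun k Qk => Qk ^ n + C ((n : T) ^ (n * NN n k)) * X) k
  have hQ0 : Q 0 = C ω := rfl
  have hQsucc : ∀ k, Q (k+1) = Q k ^ n + C ((n : T) ^ (n * NN n k)) * X := fun k => rfl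
  have hEval : ∀ k, Polynomial.aeval b (Q k) = (n : ℂ) ^ (NN n k) * g^[k] w := by
    intro k
    induction k with
    | zero => simp [hQ0, NN, hω]
    | succ k ih =>
      rw [hQsucc, map_add, map_mul, map_pow, Polynomial.aeval_C, Polynomial.aeval_X, ih]
      have hiter : g^[k+1] w = ((g^[k] w) ^ n + b) / n := by
        rw [Function.iterate_succ_apply', hg]
      rw [hiter]
      have halg : (algebraMap T ℂ) ((n : T) ^ (n * NN n k)) = (n : ℂ) ^ (n * NN n k) := by
        push_cast; rfl
      rw [halg]
      show ((n:ℂ) ^ NN n k * g^[k] w) ^ n + (n:ℂ) ^ (n * NN n k) * b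
        = (n:ℂ) ^ (NN n (k+1)) * (((g^[k] w) ^ n + b) / n)
      rw [show NN n (k+1) = n * NN n k + 1 from rfl]
      field_simp
      ring
  have hMonic : ∀ k, 1 ≤ k → (Q k).Monic ∧ (Q k).natDegree = n ^ (k - 1) := by
    intro k
    induction k with
    | zero => omega
    | succ k ih =>
      intro _
      rcases Nat.eq_zero_or_pos k with rfl | hk
      · have e1 : (C ω : Polynomial T) ^ n = C (ω ^ n) := by rw [map_pow]
        have e2 : ((n : T)) ^ (n * NN n 0) = 1 := by simp [NN]
        have e3 : Q (0+1) = X + C (ω ^ n) := by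
          rw [hQsucc 0, hQ0, e1, e2, map_one, one_mul, add_comm]
        constructor
        · rw [e3]; exact Polynomial.monic_X_add_C _
        · rw [e3, Polynomial.natDegree_X_add_C]; simp
      · obtain ⟨hm, hdeg⟩ := ih hk
        have hmp : ((Q k) ^ n).Monic := hm.pow n
        have hdp : ((Q k) ^ n).natDegree = n ^ k := by
          rw [hm.natDegree_pow, hdeg, ← pow_succ']
          congr 1
          omega
        have hlt : (C ((n : T) ^ (n * NN n k)) * X).degree < ((Q k) ^ n).degree := by
          refine lt_of_le_of_lt (Polynomial.degree_C_mul_X_le _) ?_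
          rw [Polynomial.degree_eq_natDegree hmp.ne_zero, hdp]
          exact_mod_cast Nat.one_lt_cast.mpr (by
            calc 1 < n ^ 1 := by rw [pow_one]; omega
            _ ≤ n ^ k := Nat.pow_le_pow_right (by omega) hk)
        rw [hQsucc]
        exact ⟨hmp.add_of_left hlt,
          by rw [Polynomial.natDegree_add_eq_left_of_degree_lt hlt, hdp]; congr 1⟩
  have hIntT : IsIntegral T b := by
    obtain ⟨hm, hdeg⟩ := hMonic h hh
    refine ⟨Q h - C ((n : T) ^ (NN n h) * ω), ?_, ?_⟩
    · apply hm.sub_of_left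
      refine lt_of_le_of_lt Polynomial.degree_C_le ?_
      rw [Polynomial.degree_eq_natDegree hm.ne_zero, hdeg]
      exact_mod_cast Nat.cast_pos.mpr (pow_pos (by omega) (h-1))
    · have : Polynomial.aeval b (Q h - C ((n : T) ^ (NN n h) * ω)) = 0 := by
        rw [map_sub, Polynomial.aeval_C, hEval, hper]
        have : (algebraMap T ℂ) ((n : T) ^ (NN n h) * ω) = (n : ℂ) ^ (NN n h) * w := by
          push_cast [hω]; rfl
        rw [this]
        ring
      simpa [Polynomial.aeval_def] using this
  haveI : Algebra.IsIntegral ℤ T := Algebra.IsIntegral.adjoin (by rintro x rfl; exact hw)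
  exact isIntegral_trans b hIntT

theorem auxPow (n : ℕ) (hn : 2 ≤ n) (b : ℂ) (hb : IsIntegral ℤ (b ^ (n-1))) :
    IsIntegral ℤ b := by
  set R := Algebra.adjoin ℤ {b ^ (n-1)} with hR
  have hbR : b ^ (n-1) ∈ R := Algebra.subset_adjoin rfl
  have hIntR : IsIntegral R b := by
    refine ⟨Polynomial.X ^ (n-1) - Polynomial.C ⟨b ^ (n-1), hbR⟩,
      Polynomial.monic_X_pow_sub_C _ (by omega), ?_⟩
    have : Polynomial.aeval b (Polynomial.X ^ (n-1) - Polynomial.C (⟨b ^ (n-1), hbR⟩ : R))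
        = 0 := by
      rw [map_sub, map_pow, Polynomial.aeval_X, Polynomial.aeval_C]
      show b ^ (n-1) - b ^ (n-1) = 0
      ring
    simpa [Polynomial.aeval_def] using this
  haveI : Algebra.IsIntegral ℤ R := Algebra.IsIntegral.adjoin (by rintro x rfl; exact hb)
  exact isIntegral_trans b hIntR

theorem auxOrbit (n : ℕ) (hn : 2 ≤ n) (b : ℂ) (g : ℂ → ℂ)
    (hg : g = fun z : ℂ => (z ^ n + b) / n)
    (w : ℂ) (h : ℕ) (hh : 1 ≤ h) (hper : g^[h] w = w)
    (hb : IsIntegral ℤ b) (j : ℕ) : IsIntegral ℤ (g^[j] w) := by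
  refine auxA n hn b g hg (g^[j] w) h hh ?_ hb
  rw [← Function.iterate_add_apply, add_comm, Function.iterate_add_apply, hper]

theorem auxMu (n : ℕ) (hn : 2 ≤ n) (b : ℂ) (g : ℂ → ℂ)
    (hg : g = fun z : ℂ => (z ^ n + b) / n)
    (w : ℂ) (h : ℕ) (hh : 1 ≤ h) (hper : g^[h] w = w)
    (μ : ℂ) (hμ : μ = ∏ j ∈ Finset.range h, (g^[j] w) ^ (n - 1))
    (hb : IsIntegral ℤ b) : IsIntegral ℤ μ := by
  rw [← mem_integralClosure_iff, hμ]
  exact Subalgebra.prod_mem _ fun j _ => Subalgebra.pow_mem _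
    (by rw [mem_integralClosure_iff]; exact auxOrbit n hn b g hg w h hh hper hb j) _

theorem auxD (n : ℕ) (hn : 2 ≤ n) (b : ℂ) (g : ℂ → ℂ)
    (hg : g = fun z : ℂ => (z ^ n + b) / n)
    (w : ℂ) (h : ℕ) (hh : 1 ≤ h) (hper : g^[h] w = w)
    (μ : ℂ) (hμ : μ = ∏ j ∈ Finset.range h, (g^[j] w) ^ (n - 1))
    (hμint : IsIntegral ℤ μ) : IsIntegral ℤ b := by
  have hn0 : (n : ℂ) ≠ 0 := Nat.cast_ne_zero.mpr (by omega)
  by_contra hb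
  obtain ⟨V, hbV⟩ := aux_exists_vs b hb
  set v := V.valuation with hv
  have hμV : μ ∈ V := by
    have h1 : IsIntegral V.toSubring μ := hμint.tower_top
    exact LocalSubring.mem_of_isMax_of_isIntegral V.isMax_toLocalSubring h1
  have hb1 : 1 < v b := by
    by_contra hle
    exact hbV (V.mem_of_valuation_le_one b (not_lt.mp hle))
  set u : ℕ → ℂ := fun j => g^[j] w with hu
  have hu_mod : ∀ j, u j = u (j % h) := by
    intro j
    have hfix : ∀ k, g^[h * k] w = w := fun k => by
      rw [Function.iterate_mul]; exact Function.iterate_fixed hper k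
    show g^[j] w = g^[j % h] w
    conv_lhs => rw [← Nat.mod_add_div j h]
    rw [Function.iterate_add_apply, hfix]
  have hurec : ∀ j, (n : ℂ) * u (j+1) = u j ^ n + b := by
    intro j
    have : u (j+1) = g (u j) := Function.iterate_succ_apply' g j w
    rw [this, hg]
    field_simp
  have hvn : v (n : ℂ) ≤ 1 := by
    rw [hv, V.valuation_le_one_iff]
    exact natCast_mem V.toSubring n
  have hne : (Finset.range h).Nonempty := ⟨0, Finset.mem_range.mpr (by omega)⟩
  set M : V.ValueGroup := (Finset.range h).sup' hne (fun j => v (u j)) with hM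
  have hM_ub : ∀ j, v (u j) ≤ M := by
    intro j
    rw [hu_mod j, hM]
    exact Finset.le_sup' (fun j => v (u j)) (Finset.mem_range.mpr (Nat.mod_lt j (show 0 < h by omega)))
  obtain ⟨j₀, hj₀mem, hj₀⟩ := Finset.exists_mem_eq_sup' hne (fun j => v (u j))
  -- key recursion in valuation form
  have hval : ∀ j, v (n : ℂ) * v (u (j+1)) = v (u j ^ n + b) := by
    intro j
    rw [← Valuation.map_mul, hurec j]
  -- Step 1 : M ^ n ≤ v b
  have step1 : ¬ (v b < M ^ n) := by
    intro hlt
    have hM1 : 1 < M := by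
      by_contra hle
      push_neg at hle
      exact absurd (lt_trans hb1 hlt) (not_lt.mpr (pow_le_one' hle n))
    have hadd : v (u j₀ ^ n + b) = M ^ n := by
      rw [Valuation.map_add_eq_of_lt_left]
      · rw [Valuation.map_pow, ← hj₀]
      · rw [Valuation.map_pow, ← hj₀]; exact hlt
    have h2 : M ^ n ≤ v (u (j₀ + 1)) := by
      have := hval j₀
      rw [hadd] at this
      calc M ^ n = v (n:ℂ) * v (u (j₀+1)) := this.symm
        _ ≤ 1 * v (u (j₀+1)) := mul_le_mul_left hvn _
        _ = v (u (j₀+1)) := one_mul _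
    have h3 : M ^ n ≤ M := le_trans h2 (hM_ub _)
    have h4 : M < M ^ n := by
      calc M = M ^ 1 := (pow_one M).symm
        _ < M ^ n := pow_lt_pow_right₀ hM1 (by omega)
    exact absurd h3 (not_le.mpr h4)
  -- Step 2 : v b ≤ M ^ n
  have step2 : ¬ (M ^ n < v b) := by
    intro hlt
    have hj : v (u j₀ ^ n + b) = v b := by
      rw [Valuation.map_add_eq_of_lt_right]
      rw [Valuation.map_pow, ← hj₀]
      exact hlt
    have h2 : v b ≤ v (u (j₀ + 1)) := by
      have := hval j₀
      rw [hj] at this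
      calc v b = v (n:ℂ) * v (u (j₀+1)) := this.symm
        _ ≤ 1 * v (u (j₀+1)) := mul_le_mul_left hvn _
        _ = v (u (j₀+1)) := one_mul _
    have h3 : v b ≤ M := le_trans h2 (hM_ub _)
    have hM1 : 1 < M := lt_of_lt_of_le hb1 h3
    have h4 : M ≤ M ^ n := by
      calc M = M ^ 1 := (pow_one M).symm
        _ ≤ M ^ n := pow_le_pow_right' hM1.le (by omega)
    exact absurd (lt_of_le_of_lt (le_trans h3 h4) hlt) (lt_irrefl _)
  have hMn : M ^ n = v b := le_antisymm (not_lt.mp step1) (not_lt.mp step2)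
  have hM1 : 1 < M := by
    by_contra hle
    push_neg at hle
    exact absurd (hMn ▸ hb1) (not_lt.mpr (pow_le_one' hle n))
  -- every orbit point has v (u j) ^ n = v b
  have horb : ∀ j, v (u j) ^ n = v b := by
    intro j
    have hle : v (u j) ^ n ≤ v b := hMn ▸ pow_le_pow_left' (hM_ub j) n
    rcases lt_or_eq_of_le hle with hlt | heq
    · exfalso
      have hj : v (u j ^ n + b) = v b := by
        rw [Valuation.map_add_eq_of_lt_right]
        rw [Valuation.map_pow]
        exact hlt
      have h2 : v b ≤ v (u (j + 1)) := by
        have := hval j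
        rw [hj] at this
        calc v b = v (n:ℂ) * v (u (j+1)) := this.symm
          _ ≤ 1 * v (u (j+1)) := mul_le_mul_left hvn _
          _ = v (u (j+1)) := one_mul _
      have h3 : v b ≤ M := le_trans h2 (hM_ub _)
      have h4 : M < M ^ n := by
        calc M = M ^ 1 := (pow_one M).symm
          _ < M ^ n := pow_lt_pow_right₀ hM1 (by omega)
      rw [hMn] at h4
      exact absurd h4 (not_lt.mpr h3)
    · exact heq
  -- conclude
  have hvμ : v μ ^ n = (v b ^ (n-1)) ^ h := by
    rw [hμ]
    rw [map_prod]
    rw [← Finset.prod_pow]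
    rw [Finset.prod_congr rfl (fun j _ => ?_), Finset.prod_const, Finset.card_range]
    rw [Valuation.map_pow, ← pow_mul, mul_comm (n-1) n, pow_mul, horb j]
  have hgt : 1 < v μ ^ n := by
    rw [hvμ]
    exact one_lt_pow' (one_lt_pow' hb1 (by omega)) (by omega)
  have hle : v μ ≤ 1 := by rw [hv, V.valuation_le_one_iff]; exact hμV
  exact absurd hgt (not_lt.mpr (pow_le_one' hle n))


theorem stmt2 (n : ℕ) (hn : 2 ≤ n) (b : ℂ) (g : ℂ → ℂ)
    (hg : g = fun z : ℂ => (z ^ n + b) / n)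
    (w : ℂ) (h : ℕ) (hh : 1 ≤ h) (hper : g^[h] w = w)
    (μ : ℂ) (hμ : μ = ∏ j ∈ Finset.range h, (g^[j] w) ^ (n - 1))
    (hone : IsIntegral ℤ μ ∨ IsIntegral ℤ w ∨ IsIntegral ℤ b ∨
      IsIntegral ℤ (b ^ (n - 1))) :
    IsIntegral ℤ μ ∧ IsIntegral ℤ w ∧ IsIntegral ℤ b ∧
      IsIntegral ℤ (b ^ (n - 1)) := by
  have hb : IsIntegral ℤ b := by
    rcases hone with hμi | hwi | hbi | hpi
    · exact auxD n hn b g hg w h hh hper μ hμ hμi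
    · exact auxB n hn b g hg w h hh hper hwi
    · exact hbi
    · exact auxPow n hn b hpi
  exact ⟨auxMu n hn b g hg w h hh hper μ hμ hb, auxA n hn b g hg w h hh hper hb,
    hb, hb.pow _⟩
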